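/- Let F/F₀ be an unramified quadratic extension of p-adic fields with Galois involution a ↦ ā and uniformizer ϖ of F₀. Let V̄ be a vector space over the completion F̆ of the maximal unramified extension of F, equipped with a σ-sesquilinear pairing {·,·} descending from a Hermitian form on an F-space 𝕍 (so {x,y} is O_F̆-linear in x and σ-semilinear in y), and let Φ = id ⊗ σ be the Frobenius-semilinear automorphism fixing 𝕍. Let A ⊂ V̄ be a special lattice, i.e. an O_F̆-lattice with A^∨ ⊆ A, dim_𝔽(A/A^∨) = 1, and A ⊆ ϖ^{-1}A^∨, where A^∨ = {x : {x, A} ⊆ O_F̆} and (A^∨)^∨ = Φ(A). If u ∈ 𝕍 satisfies (u,u) ∈ O_F and u ∈ A, then u ∈ A^∨. -/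

import Mathlib

/-- the Claim in the proof of Proposition 5.2.  `K = F̆` is the
completion of the maximal unramified extension, with ring of integers `O = O_F̆`,
uniformizer `ϖ` and Frobenius `τ = σ`.  `V̄` is a `K`-vector space with a `σ`-sesquilinear
pairing `φ = {·,·}` (linear in the first variable, `τ`-semilinear in the second), and
`Φ = id ⊗ σ` is the `τ`-semilinear automorphism whose fixed vectors contain the Hermitian
space `𝕍`.  `A ⊂ V̄` is a special lattice: `A^∨ ⊆ A`, `dim_𝔽(A/A^∨) = 1`,
`A ⊆ ϖ⁻¹A^∨` and `(A^∨)^∨ = Φ(A)`, where `A^∨ = {x | {x, A} ⊆ O}`.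
If `u` is `Φ`-fixed (i.e. `u ∈ 𝕍`) with integral norm `{u,u} ∈ O` and `u ∈ A`,
then `u ∈ A^∨`. -/
theorem stmt5
    {O K V : Type*} [CommRing O] [IsDomain O] [IsDiscreteValuationRing O]
    [Field K] [Algebra O K] [IsFractionRing O K]
    (ϖ : O) (hϖ : Irreducible ϖ)
    (τ : K ≃+* K)
    [AddCommGroup V] [Module K V] [Module O V] [IsScalarTower O K V]
    (φ : V →ₗ[K] V →ₛₗ[(τ : K →+* K)] K)
    (Φ : V → V) (hΦadd : ∀ x y : V, Φ (x + y) = Φ x + Φ y)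
    (hΦsemilin : ∀ (c : K) (x : V), Φ (c • x) = τ c • Φ x)
    (hΦbij : Function.Bijective Φ)
    (A : Submodule O V) (hAfg : A.FG) (hAfull : Submodule.span K (A : Set V) = ⊤)
    -- `A^∨ ⊆ A`:
    (hdual_le : ∀ x : V, (∀ y ∈ A, φ x y ∈ (algebraMap O K).range) → x ∈ A)
    -- `A ≠ A^∨` and `dim_𝔽 (A / A^∨) = 1`:
    (hne : ∃ a ∈ A, ¬ (∀ y ∈ A, φ a y ∈ (algebraMap O K).range))
    (hcodim1 : ∀ a ∈ A, ¬ (∀ y ∈ A, φ a y ∈ (algebraMap O K).range) →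
      ∀ x ∈ A, ∃ c : O, ∀ y ∈ A, φ (x - c • a) y ∈ (algebraMap O K).range)
    -- `A ⊆ ϖ⁻¹ A^∨`:
    (hmod : ∀ x ∈ A, ∀ y ∈ A, φ (ϖ • x) y ∈ (algebraMap O K).range)
    -- `(A^∨)^∨ = Φ(A)`:
    (hbidual : ∀ x : V,
      ((∀ y : V, (∀ z ∈ A, φ y z ∈ (algebraMap O K).range) →
          φ x y ∈ (algebraMap O K).range) ↔ ∃ a ∈ A, Φ a = x))
    (u : V) (hu𝕍 : Φ u = u)
    (hnorm : φ u u ∈ (algebraMap O K).range)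
    (huA : u ∈ A) :
    ∀ y ∈ A, φ u y ∈ (algebraMap O K).range := by

  classical
  -- Trivial case: `φ u` vanishes on `A`.
  by_cases h0 : ∀ z ∈ A, φ u z = 0
  · intro y hy
    rw [h0 y hy]
    exact zero_mem _
  push_neg at h0
  obtain ⟨z₁, hz₁A, hz₁⟩ := h0
  -- `u ∈ (A^∨)^∨` since `Φ u = u ∈ Φ(A)`.
  have Hu : ∀ y : V, (∀ z ∈ A, φ y z ∈ (algebraMap O K).range) →
      φ u y ∈ (algebraMap O K).range := (hbidual u).mpr ⟨u, huA, hu𝕍⟩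
  have hinj : Function.Injective (algebraMap O K) := IsFractionRing.injective O K
  have hϖ0 : (algebraMap O K) ϖ ≠ 0 := fun h => hϖ.ne_zero (hinj (by simpa using h))
  -- `y₁ := ϖ • z₁ ∈ A^∨` with `φ u y₁ ≠ 0`.
  have hy₁dual : ∀ z ∈ A, φ (ϖ • z₁) z ∈ (algebraMap O K).range := hmod z₁ hz₁A
  obtain ⟨s, hs⟩ := Hu _ hy₁dual
  have hφuy₁ : φ u (ϖ • z₁) = τ ((algebraMap O K) ϖ) * φ u z₁ := by
    rw [← algebraMap_smul K ϖ z₁, (φ u).map_smulₛₗ, smul_eq_mul]; rfl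
  have hs0 : s ≠ 0 := by
    intro h
    rw [h, map_zero] at hs
    rcases mul_eq_zero.mp (hφuy₁ ▸ hs.symm) with h' | h'
    · exact hϖ.ne_zero (by simpa using h')
    · exact hz₁ h'
  -- Key lemma: `τ` maps the image of `O` into itself.
  have Hτ : ∀ d : O, τ ((algebraMap O K) d) ∈ (algebraMap O K).range := by
    intro d
    by_contra hd
    set lam := τ ((algebraMap O K) d) with hlamdef
    have hlam0 : lam ≠ 0 := by
      intro h
      exact hd (h ▸ zero_mem _)
    rcases ValuationRing.isInteger_or_isInteger O lam with h | h
    · exact hd h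
    obtain ⟨m, hm⟩ := h
    have hm0 : m ≠ 0 := by
      intro h
      rw [h, map_zero] at hm
      exact inv_ne_zero hlam0 hm.symm
    have hmnu : ¬ IsUnit m := by
      intro hmu
      apply hd
      have h1 : (algebraMap O K) ((hmu.unit⁻¹ : Oˣ) : O) * (algebraMap O K) m = 1 := by
        rw [← map_mul, ← map_one (algebraMap O K)]
        congr 1
        simpa using hmu.unit.inv_mul
      rw [hm] at h1
      rw [← div_eq_mul_inv] at h1
      field_simp at h1
      exact ⟨_, h1⟩
    have hϖdvdm : ϖ ∣ m := by
      have hmem : m ∈ IsLocalRing.maximalIdeal O := hmnu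
      rw [hϖ.maximalIdeal_eq, Ideal.mem_span_singleton] at hmem
      exact hmem
    -- `Φ (d^n • u) = lam^n • u ∈ (A^∨)^∨`.
    have hΦpow : ∀ n : ℕ, Φ ((d ^ n : O) • u) = lam ^ n • u := by
      intro n
      induction n with
      | zero => simpa using hu𝕍
      | succ n ih =>
        have : (d ^ (n + 1) : O) • u = (algebraMap O K d) • ((d ^ n : O) • u) := by
          rw [algebraMap_smul, ← smul_assoc, smul_eq_mul, pow_succ, mul_comm]
        rw [this, hΦsemilin, ih, ← hlamdef, smul_smul, ← pow_succ']
    have key : ∀ n : ℕ, ϖ ^ n ∣ s := by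
      intro n
      have hmem : φ (lam ^ n • u) (ϖ • z₁) ∈ (algebraMap O K).range := by
        refine (hbidual (lam ^ n • u)).mpr ⟨(d ^ n : O) • u, A.smul_mem _ huA, hΦpow n⟩ _ hy₁dual
      have heq : φ (lam ^ n • u) (ϖ • z₁) = lam ^ n * (algebraMap O K) s := by
        rw [φ.map_smul (lam ^ n) u, LinearMap.smul_apply, smul_eq_mul, ← hs]
      rw [heq] at hmem
      obtain ⟨r, hr⟩ := hmem
      have hmlam : lam * (algebraMap O K) m = 1 := by
        rw [hm, mul_inv_cancel₀ hlam0]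
      have hseq : (algebraMap O K) (r * m ^ n) = (algebraMap O K) s := by
        rw [map_mul, map_pow, hr]
        calc lam ^ n * (algebraMap O K) s * (algebraMap O K) m ^ n
            = (lam * (algebraMap O K) m) ^ n * (algebraMap O K) s := by ring
          _ = (algebraMap O K) s := by rw [hmlam, one_pow, one_mul]
      have : r * m ^ n = s := hinj hseq
      obtain ⟨m', hm'⟩ := hϖdvdm
      exact ⟨r * m' ^ n, by rw [← this, hm', mul_pow]; ring⟩
    obtain ⟨k, u₀, hku⟩ := IsDiscreteValuationRing.eq_unit_mul_pow_irreducible hs0 hϖ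
    obtain ⟨t, ht⟩ := key (k + 1)
    apply hϖ.not_isUnit
    have hcancel : (u₀ : O) = ϖ * t := by
      have hϖk : (ϖ : O) ^ k ≠ 0 := pow_ne_zero _ hϖ.ne_zero
      apply mul_left_cancel₀ hϖk
      calc ϖ ^ k * (u₀ : O) = (u₀ : O) * ϖ ^ k := by ring
        _ = s := hku.symm
        _ = ϖ ^ (k + 1) * t := ht
        _ = ϖ ^ k * (ϖ * t) := by ring
    exact isUnit_of_dvd_unit ⟨t, hcancel⟩ u₀.isUnit
  -- Main argument.
  obtain ⟨a, haA, hadual⟩ := hne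
  obtain ⟨c, hw⟩ := hcodim1 a haA hadual u huA
  by_cases hcu : IsUnit c
  · -- `c` is a unit: `A = O·u + A^∨` essentially, with `u = (u - c•a) + c•a`.
    have hca : c • a = u - (u - c • a) := by abel
    have he : φ u (c • a) ∈ (algebraMap O K).range := by
      rw [hca, map_sub]
      exact sub_mem hnorm (Hu _ hw)
    intro y hy
    obtain ⟨c', hy'⟩ := hcodim1 a haA hadual y hy
    have h1 : φ u (y - c' • a) ∈ (algebraMap O K).range := Hu _ hy'
    have hsplit : φ u y = φ u (y - c' • a) + φ u (c' • a) := by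
      rw [← map_add]
      congr 1
      abel
    have h3 : φ u (c' • a) = τ ((algebraMap O K) (c' * ((hcu.unit⁻¹ : Oˣ) : O))) * φ u (c • a) := by
      have e1 : φ u (c' • a) = τ ((algebraMap O K) c') * φ u a := by
        rw [← algebraMap_smul K c' a, (φ u).map_smulₛₗ, smul_eq_mul]; rfl
      have e2 : φ u (c • a) = τ ((algebraMap O K) c) * φ u a := by
        rw [← algebraMap_smul K c a, (φ u).map_smulₛₗ, smul_eq_mul]; rfl
      rw [e1, e2, ← mul_assoc, ← map_mul τ, ← map_mul]
      congr 3
      have : ((hcu.unit⁻¹ : Oˣ) : O) * c = 1 := by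
        have := hcu.unit.inv_mul
        simpa using this
      rw [mul_assoc, this, mul_one]
    rw [hsplit, h3]
    exact add_mem h1 (mul_mem (Hτ _) he)
  · -- `c` is not a unit: then `c • a ∈ A^∨` already, so `u ∈ A^∨`.
    have hϖdvdc : ϖ ∣ c := by
      have hmem : c ∈ IsLocalRing.maximalIdeal O := hcu
      rw [hϖ.maximalIdeal_eq, Ideal.mem_span_singleton] at hmem
      exact hmem
    obtain ⟨c₂, hc₂⟩ := hϖdvdc
    intro y hy
    have h1 : φ (u - c • a) y ∈ (algebraMap O K).range := hw y hy
    have h2 : φ (c • a) y ∈ (algebraMap O K).range := by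
      have : c • a = ϖ • (c₂ • a) := by rw [smul_smul, ← hc₂]
      rw [this]
      exact hmod (c₂ • a) (A.smul_mem _ haA) y hy
    have : φ u y = φ (u - c • a) y + φ (c • a) y := by
      rw [← LinearMap.add_apply, ← map_add]
      congr 2
      abel
    rw [this]
    exact add_mem h1 h2
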